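/- Let 𝒜 be a simple C*-algebra acting on a Hilbert space, let U(t) = exp(itA) for a self-adjoint operator A with U(t) implementing, by conjugation twisted by phases, the given unitaries generating 𝒜 (i.e., there exist unitaries u_g ∈ 𝒜 spanning a dense subspace such that U(t) u_g = e^{ic_g t} u_g U(t) for real constants c_g). Then the set J = {M ∈ 𝒜 : ‖(U(t) − 1)M‖ → 0 as t → 0} is a closed two-sided ideal of 𝒜, hence J = {0} or J = 𝒜. -/

import Mathlib

open Filter

/-- Let `𝒜` be a simple C*-algebra represented faithfully (isometrically) on a Hilbert
space `H`, generated (as a closed linear span) by unitaries `u_g`, and let `U(t)` be a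
one-parameter unitary group on `H` satisfying the twisted commutation relations
`U(t) u_g = e^{i c_g t} u_g U(t)`. Then the set
`J = {M ∈ 𝒜 : ‖(U(t) − 1) π(M)‖ → 0 as t → 0}` is a closed two-sided ideal of `𝒜`,
hence `J = {0}` or `J = 𝒜`. -/
theorem twisted_mollifier_ideal_trivial
    {H : Type*} [NormedAddCommGroup H] [InnerProductSpace ℂ H] [CompleteSpace H]
    {A : Type*} [NormedRing A] [StarRing A] [CStarRing A] [NormedAlgebra ℂ A]
    [CompleteSpace A] [StarModule ℂ A]
    (π : A →⋆ₐ[ℂ] (H →L[ℂ] H)) (hπ : Isometry π)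
    {G : Type*} (u : G → A) (hu : ∀ g, u g ∈ unitary A)
    (hdense : Dense ((Submodule.span ℂ (Set.range u) : Submodule ℂ A) : Set A))
    (U : ℝ → (H →L[ℂ] H)) (hU : ∀ t, U t ∈ unitary (H →L[ℂ] H))
    (hU0 : U 0 = 1) (hUgrp : ∀ s t : ℝ, U (s + t) = U s * U t)
    (c : G → ℝ)
    (htwist : ∀ (t : ℝ) (g : G),
      U t * π (u g) = Complex.exp (Complex.I * (c g) * t) • (π (u g) * U t))
    (hsimple : ∀ J : Submodule ℂ A, IsClosed (J : Set A) →
      (∀ a x, x ∈ J → a * x ∈ J) → (∀ a x, x ∈ J → x * a ∈ J) → J = ⊥ ∨ J = ⊤) :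
    ∃ J : Submodule ℂ A,
      (J : Set A) = {M : A |
        Tendsto (fun t : ℝ => ‖(U t - 1) * π M‖) (nhds 0) (nhds 0)} ∧
      IsClosed (J : Set A) ∧
      (∀ a x, x ∈ J → a * x ∈ J) ∧ (∀ a x, x ∈ J → x * a ∈ J) ∧
      ((J : Set A) = {0} ∨ (J : Set A) = Set.univ) := by
  classical
  -- basic norm facts
  have hnorm : ∀ M : A, ‖π M‖ = ‖M‖ := fun M => by
    simpa using (AddMonoidHomClass.isometry_iff_norm π).mp hπ M
  have hone : ‖(1 : H →L[ℂ] H)‖ ≤ 1 := ContinuousLinearMap.norm_id_le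
  have hUnorm : ∀ t, ‖U t‖ ≤ 1 := by
    intro t
    have h := (Unitary.mem_iff.mp (hU t)).1
    have h2 : ‖star (U t) * U t‖ = ‖U t‖ * ‖U t‖ := CStarRing.norm_star_mul_self
    rw [h] at h2
    nlinarith [norm_nonneg (U t)]
  have hUsub : ∀ t, ‖U t - 1‖ ≤ 2 := by
    intro t
    calc ‖U t - 1‖ ≤ ‖U t‖ + ‖(1 : H →L[ℂ] H)‖ := norm_sub_le _ _
      _ ≤ 2 := by linarith [hUnorm t]
  have hA1 : ‖(1 : A)‖ ≤ 1 := by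
    have h2 : ‖star (1 : A) * 1‖ = ‖(1 : A)‖ * ‖(1 : A)‖ := CStarRing.norm_star_mul_self
    simp only [star_one, one_mul] at h2
    nlinarith [norm_nonneg (1 : A)]
  have hun : ∀ g, ‖u g‖ ≤ 1 := by
    intro g
    have h := (Unitary.mem_iff.mp (hu g)).1
    have h2 : ‖star (u g) * u g‖ = ‖u g‖ * ‖u g‖ := CStarRing.norm_star_mul_self
    rw [h] at h2
    nlinarith [norm_nonneg (u g)]
  set S : Set A := {M : A |
      Tendsto (fun t : ℝ => ‖(U t - 1) * π M‖) (nhds 0) (nhds 0)} with hSdef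
  have hmem : ∀ M : A, M ∈ S ↔
      Tendsto (fun t : ℝ => ‖(U t - 1) * π M‖) (nhds 0) (nhds 0) := fun _ => Iff.rfl
  have hzero : (0 : A) ∈ S := by
    rw [hmem]
    simpa using (tendsto_const_nhds :
      Tendsto (fun _ : ℝ => (0 : ℝ)) (nhds 0) (nhds 0))
  have hadd : ∀ {M N : A}, M ∈ S → N ∈ S → M + N ∈ S := by
    intro M N hM hN
    rw [hmem] at hM hN ⊢
    have := hM.add hN
    refine squeeze_zero (fun t => norm_nonneg _) (fun t => ?_) (by simpa using this)
    rw [map_add, mul_add]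
    exact norm_add_le _ _
  have hsmul : ∀ (z : ℂ) {M : A}, M ∈ S → z • M ∈ S := by
    intro z M hM
    rw [hmem] at hM ⊢
    have : Tendsto (fun t : ℝ => ‖z‖ * ‖(U t - 1) * π M‖) (nhds 0) (nhds 0) := by
      simpa using hM.const_mul ‖z‖
    refine squeeze_zero (fun t => norm_nonneg _) (fun t => ?_) this
    rw [map_smul, mul_smul_comm, norm_smul]
  -- difference bound
  have hbound : ∀ (M N : A) (t : ℝ),
      ‖(U t - 1) * π M‖ ≤ ‖(U t - 1) * π N‖ + 2 * ‖M - N‖ := by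
    intro M N t
    have hsplit : (U t - 1) * π M = (U t - 1) * π N + (U t - 1) * π (M - N) := by
      rw [map_sub, mul_sub]; abel
    calc ‖(U t - 1) * π M‖
        ≤ ‖(U t - 1) * π N‖ + ‖(U t - 1) * π (M - N)‖ := by
          rw [hsplit]; exact norm_add_le _ _
      _ ≤ ‖(U t - 1) * π N‖ + 2 * ‖M - N‖ := by
          have := norm_mul_le (U t - 1) (π (M - N))
          have h2 := hUsub t
          have h3 := hnorm (M - N)
          nlinarith [norm_nonneg (π (M - N)), norm_nonneg (M - N)]
  have hclosed : IsClosed S := by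
    rw [← closure_subset_iff_isClosed]
    intro M hM
    rw [hmem, Metric.tendsto_nhds]
    intro ε hε
    obtain ⟨N, hN, hdist⟩ := Metric.mem_closure_iff.mp hM (ε / 4) (by positivity)
    rw [hmem, Metric.tendsto_nhds] at hN
    filter_upwards [hN (ε / 4) (by positivity)] with t ht
    have hb := hbound M N t
    rw [Real.dist_eq, sub_zero, abs_of_nonneg (norm_nonneg _)] at ht ⊢
    have : ‖M - N‖ < ε / 4 := by rwa [dist_eq_norm] at hdist
    linarith
  -- key twist computation
  have hkey : ∀ (g : G) (x : A) (t : ℝ),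
      (U t - 1) * π (u g * x)
        = Complex.exp (Complex.I * (c g) * t) • (π (u g) * ((U t - 1) * π x))
          + (Complex.exp (Complex.I * (c g) * t) - 1) • (π (u g) * π x) := by
    intro g x t
    rw [map_mul]
    rw [sub_mul, one_mul, ← mul_assoc, htwist t g]
    simp only [smul_mul_assoc, mul_smul_comm, mul_sub, sub_mul, mul_one, one_mul,
      smul_sub, sub_smul, one_smul, mul_assoc]
    abel
  have hexpnorm : ∀ (g : G) (t : ℝ), ‖Complex.exp (Complex.I * (c g) * t)‖ = 1 := by
    intro g t
    rw [Complex.norm_exp]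
    simp [Complex.mul_re]
  have hexptend : ∀ g : G,
      Tendsto (fun t : ℝ => ‖Complex.exp (Complex.I * (c g) * t) - 1‖)
        (nhds 0) (nhds 0) := by
    intro g
    have hc : Continuous fun t : ℝ => ‖Complex.exp (Complex.I * (c g) * t) - 1‖ := by
      fun_prop
    have := hc.tendsto 0
    simpa using this
  -- left multiplication by generators
  have hug : ∀ (g : G) (x : A), x ∈ S → u g * x ∈ S := by
    intro g x hx
    rw [hmem] at hx ⊢
    have htend : Tendsto
        (fun t : ℝ => ‖(U t - 1) * π x‖ + ‖Complex.exp (Complex.I * (c g) * t) - 1‖ * ‖x‖)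
        (nhds 0) (nhds 0) := by
      have := hx.add ((hexptend g).mul_const ‖x‖)
      simpa using this
    refine squeeze_zero (fun t => norm_nonneg _) (fun t => ?_) htend
    rw [hkey g x t]
    calc ‖Complex.exp (Complex.I * (c g) * t) • (π (u g) * ((U t - 1) * π x))
          + (Complex.exp (Complex.I * (c g) * t) - 1) • (π (u g) * π x)‖
        ≤ ‖Complex.exp (Complex.I * (c g) * t) • (π (u g) * ((U t - 1) * π x))‖
          + ‖(Complex.exp (Complex.I * (c g) * t) - 1) • (π (u g) * π x)‖ :=
          norm_add_le _ _
      _ ≤ ‖(U t - 1) * π x‖ + ‖Complex.exp (Complex.I * (c g) * t) - 1‖ * ‖x‖ := by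
          rw [norm_smul, norm_smul, hexpnorm g t, one_mul]
          have h1 : ‖π (u g) * ((U t - 1) * π x)‖ ≤ ‖(U t - 1) * π x‖ := by
            have := norm_mul_le (π (u g)) ((U t - 1) * π x)
            have h2 : ‖π (u g)‖ ≤ 1 := by rw [hnorm]; exact hun g
            nlinarith [norm_nonneg ((U t - 1) * π x)]
          have h3 : ‖π (u g) * π x‖ ≤ ‖x‖ := by
            have := norm_mul_le (π (u g)) (π x)
            have h2 : ‖π (u g)‖ ≤ 1 := by rw [hnorm]; exact hun g
            have h4 := hnorm x
            nlinarith [norm_nonneg (π x), norm_nonneg x]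
          have h5 : (0:ℝ) ≤ ‖Complex.exp (Complex.I * (c g) * t) - 1‖ := norm_nonneg _
          nlinarith
  -- right ideal
  have hright : ∀ (a x : A), x ∈ S → x * a ∈ S := by
    intro a x hx
    rw [hmem] at hx ⊢
    have htend : Tendsto (fun t : ℝ => ‖(U t - 1) * π x‖ * ‖a‖) (nhds 0) (nhds 0) := by
      simpa using hx.mul_const ‖a‖
    refine squeeze_zero (fun t => norm_nonneg _) (fun t => ?_) htend
    rw [map_mul, ← mul_assoc]
    calc ‖(U t - 1) * π x * π a‖ ≤ ‖(U t - 1) * π x‖ * ‖π a‖ := norm_mul_le _ _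
      _ = ‖(U t - 1) * π x‖ * ‖a‖ := by rw [hnorm]
  -- left ideal via density
  have hleft : ∀ (a x : A), x ∈ S → a * x ∈ S := by
    intro a x hx
    have hTclosed : IsClosed {b : A | b * x ∈ S} :=
      hclosed.preimage (continuous_mul_right x)
    have hspan : ((Submodule.span ℂ (Set.range u) : Submodule ℂ A) : Set A)
        ⊆ {b : A | b * x ∈ S} := by
      intro b hb
      induction hb using Submodule.span_induction with
      | mem y hy => obtain ⟨g, rfl⟩ := hy; exact hug g x hx
      | zero => simpa [Set.mem_setOf_eq, zero_mul] using hzero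
      | add y z _ _ hy hz => simpa [Set.mem_setOf_eq, add_mul] using hadd hy hz
      | smul z y _ hy => simpa [Set.mem_setOf_eq, smul_mul_assoc] using hsmul z hy
    have hcl : a ∈ closure ((Submodule.span ℂ (Set.range u) : Submodule ℂ A) : Set A) := by
      rw [hdense.closure_eq]; trivial
    exact closure_minimal hspan hTclosed hcl
  -- build submodule
  let J : Submodule ℂ A :=
    { carrier := S
      add_mem' := fun hM hN => hadd hM hN
      zero_mem' := hzero
      smul_mem' := fun z M hM => hsmul z hM }
  refine ⟨J, rfl, hclosed, hleft, hright, ?_⟩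
  rcases hsimple J hclosed hleft hright with h | h
  · left; rw [h]; exact Submodule.bot_coe
  · right; rw [h]; exact Submodule.top_coe
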